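/- For all ω, φ in the piecewise polynomial space V_h^k (with periodic trace identification), the central-flux operator is antisymmetric: L^c(ω,φ) + L^c(φ,ω) = 0. -/

import Mathlib

open Polynomial Set

noncomputable section

namespace FW

variable {N : ℕ}

/-- Minus trace `ω⁻` at interface `j+1/2` (right end of cell `j`). -/
def trM (x : Fin (N + 1) → ℝ) (ω : Fin N → Polynomial ℝ) (j : Fin N) : ℝ :=
  (ω j).eval (x j.succ)

/-- Plus trace `ω⁺` at interface `j+1/2` (left end of the next cell, cyclically). -/
def trP [NeZero N] (x : Fin (N + 1) → ℝ) (ω : Fin N → Polynomial ℝ) (j : Fin N) : ℝ :=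
  (ω (j + 1)).eval (x (j + 1).castSucc)

/-- Average trace `{ω}`. -/
def trA [NeZero N] (x : Fin (N + 1) → ℝ) (ω : Fin N → Polynomial ℝ) (j : Fin N) : ℝ :=
  (trP x ω j + trM x ω j) / 2

/-- Jump `[ω]`. -/
def jmp [NeZero N] (x : Fin (N + 1) → ℝ) (ω : Fin N → Polynomial ℝ) (j : Fin N) : ℝ :=
  trP x ω j - trM x ω j

/-- Cell L² pairing `(u, φ)_{I_j}` of a piecewise polynomial with a test polynomial. -/
def ipj (x : Fin (N + 1) → ℝ) (u : Fin N → Polynomial ℝ) (j : Fin N) (φ : Polynomial ℝ) : ℝ :=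
  ∫ t in (x j.castSucc)..(x j.succ), (u j).eval t * φ.eval t

/-- Cell pairing `(f∘u, φ)_{I_j}`. -/
def ipfj (x : Fin (N + 1) → ℝ) (f : ℝ → ℝ) (u : Fin N → Polynomial ℝ) (j : Fin N)
    (φ : Polynomial ℝ) : ℝ :=
  ∫ t in (x j.castSucc)..(x j.succ), f ((u j).eval t) * φ.eval t

/-- Boundary pairing `⟨g, φ⟩_{I_j}` for interface values `g`. -/
def bdj [NeZero N] (x : Fin (N + 1) → ℝ) (g : Fin N → ℝ) (j : Fin N) (φ : Polynomial ℝ) : ℝ :=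
  g j * φ.eval (x j.succ) - g (j - 1) * φ.eval (x j.castSucc)

/-- Membership in the space `V_h^k` of piecewise polynomials of degree at most `k`. -/
def memV (k : ℕ) (ω : Fin N → Polynomial ℝ) : Prop :=
  ∀ j, (ω j).degree ≤ (k : WithBot ℕ)

/-- `L⁻(ω, φ)`. -/
def Lm [NeZero N] (x : Fin (N + 1) → ℝ) (ω φ : Fin N → Polynomial ℝ) : ℝ :=
  ∑ j, (-(ipj x ω j (derivative (φ j))) + bdj x (trM x ω) j (φ j))

/-- `L⁺(ω, φ)`. -/
def Lp [NeZero N] (x : Fin (N + 1) → ℝ) (ω φ : Fin N → Polynomial ℝ) : ℝ :=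
  ∑ j, (-(ipj x ω j (derivative (φ j))) + bdj x (trP x ω) j (φ j))

/-- `L^c(ω, φ)`. -/
def Lc [NeZero N] (x : Fin (N + 1) → ℝ) (ω φ : Fin N → Polynomial ℝ) : ℝ :=
  ∑ j, (-(ipj x ω j (derivative (φ j))) + bdj x (trA x ω) j (φ j))

/-- Godunov numerical flux. -/
def godunov (f : ℝ → ℝ) (c d : ℝ) : ℝ :=
  if c < d then sInf (f '' Set.Icc c d) else sSup (f '' Set.Icc d c)

/-- Conservative numerical flux for `f(u) = u^p/p`, `F(u) = u^(p+1)/(p(p+1))`. -/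
def consFlux (p : ℕ) (c d : ℝ) : ℝ :=
  if c = d then c ^ p / (p : ℝ)
  else (d ^ (p + 1) / ((p : ℝ) * ((p : ℝ) + 1)) - c ^ (p + 1) / ((p : ℝ) * ((p : ℝ) + 1))) / (d - c)

/-- Dissipative (Godunov-flux) nonlinear form `N^d`. -/
def Nd [NeZero N] (x : Fin (N + 1) → ℝ) (f : ℝ → ℝ) (ω φ : Fin N → Polynomial ℝ) : ℝ :=
  ∑ j, (-(ipfj x f ω j (derivative (φ j)))
    + bdj x (fun i => godunov f (trM x ω i) (trP x ω i)) j (φ j))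

/-- Conservative-flux nonlinear form `N^c`. -/
def Nc [NeZero N] (x : Fin (N + 1) → ℝ) (p : ℕ) (ω φ : Fin N → Polynomial ℝ) : ℝ :=
  ∑ j, (-(ipfj x (fun w => w ^ p / (p : ℝ)) ω j (derivative (φ j)))
    + bdj x (fun i => consFlux p (trM x ω i) (trP x ω i)) j (φ j))

end FW


lemma poly_ftc (p : Polynomial ℝ) (u v : ℝ) :
    ∫ t in u..v, (derivative p).eval t = p.eval v - p.eval u := by
  exact intervalIntegral.integral_eq_sub_of_hasDerivAt (fun t _ => p.hasDerivAt t)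
    ((Polynomial.continuous _).intervalIntegrable u v)

lemma ipj_symm {N : ℕ} (x : Fin (N + 1) → ℝ) (ω φ : Fin N → Polynomial ℝ) (j : Fin N) :
    FW.ipj x ω j (derivative (φ j)) + FW.ipj x φ j (derivative (ω j))
      = (ω j).eval (x j.succ) * (φ j).eval (x j.succ)
        - (ω j).eval (x j.castSucc) * (φ j).eval (x j.castSucc) := by
  unfold FW.ipj
  rw [← intervalIntegral.integral_add
    ((Continuous.fun_mul (Polynomial.continuous _) (Polynomial.continuous _)).intervalIntegrable _ _)
    ((Continuous.fun_mul (Polynomial.continuous _) (Polynomial.continuous _)).intervalIntegrable _ _)]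
  have : ((ω j * φ j).eval (x j.succ) : ℝ) - (ω j * φ j).eval (x j.castSucc)
      = (ω j).eval (x j.succ) * (φ j).eval (x j.succ)
        - (ω j).eval (x j.castSucc) * (φ j).eval (x j.castSucc) := by simp
  rw [← this, ← poly_ftc (ω j * φ j)]
  apply intervalIntegral.integral_congr
  intro t _
  simp [Polynomial.derivative_mul]
  ring

lemma trP_sub_one {N : ℕ} [NeZero N] (x : Fin (N + 1) → ℝ) (ω : Fin N → Polynomial ℝ)
    (j : Fin N) : FW.trP x ω (j - 1) = (ω j).eval (x j.castSucc) := by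
  simp [FW.trP, sub_add_cancel]

theorem stmt3 {N : ℕ} [NeZero N] (hN : 1 ≤ N) (a b : ℝ) (hab : a < b)
    (x : Fin (N + 1) → ℝ) (hx : StrictMono x) (hxa : x 0 = a) (hxb : x (Fin.last N) = b)
    (k : ℕ) (ω φ : Fin N → Polynomial ℝ)
    (hω : FW.memV k ω) (hφ : FW.memV k φ) :
    FW.Lc x ω φ + FW.Lc x φ ω = 0 := by
  classical
  set S : Fin N → ℝ := fun j =>
    (FW.trP x ω j * FW.trM x φ j + FW.trP x φ j * FW.trM x ω j) / 2 with hS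
  unfold FW.Lc
  rw [← Finset.sum_add_distrib]
  have hsum : ∀ j : Fin N,
      (-(FW.ipj x ω j (derivative (φ j))) + FW.bdj x (FW.trA x ω) j (φ j))
      + (-(FW.ipj x φ j (derivative (ω j))) + FW.bdj x (FW.trA x φ) j (ω j))
      = S j - S (j - 1) := by
    intro j
    have hip := ipj_symm x ω φ j
    have hωc : (ω j).eval (x j.castSucc) = FW.trP x ω (j - 1) := (trP_sub_one x ω j).symm
    have hφc : (φ j).eval (x j.castSucc) = FW.trP x φ (j - 1) := (trP_sub_one x φ j).symm
    have hωs : (ω j).eval (x j.succ) = FW.trM x ω j := rfl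
    have hφs : (φ j).eval (x j.succ) = FW.trM x φ j := rfl
    rw [hωc, hφc, hωs, hφs] at hip
    unfold FW.bdj
    rw [hωc, hφc, hωs, hφs]
    have : FW.ipj x ω j (derivative (φ j)) =
        FW.trM x ω j * FW.trM x φ j - FW.trP x ω (j-1) * FW.trP x φ (j-1)
        - FW.ipj x φ j (derivative (ω j)) := by linarith
    rw [this, hS]
    unfold FW.trA
    ring
  rw [Finset.sum_congr rfl (fun j _ => hsum j), Finset.sum_sub_distrib]
  have : ∑ j : Fin N, S (j - 1) = ∑ j : Fin N, S j := by
    exact Equiv.sum_comp (Equiv.subRight (1 : Fin N)) S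
  rw [this, sub_self]
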